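/- For every integer k ≥ 0, the space P_k(ℝ²; ℝ²) of planar vector fields with polynomial components of total degree at most k decomposes as the direct sum P_k(ℝ²; ℝ²) = (rot⃗ P_{k+1}(ℝ²)) ⊕ (x · P_{k-1}(ℝ²)): the subspaces {(∂₂q, −∂₁q) : q a polynomial of total degree ≤ k+1} and {x p : p a polynomial of total degree ≤ k−1} together span P_k(ℝ²; ℝ²), and their intersection is {0}. -/

import Mathlib

open MvPolynomial

noncomputable section

/-- `degLE2 p m` means `p ∈ P_m(ℝ²)`: either `p = 0` or the total degree of `p` is at
most `m` (with the convention `P_{-1} = {0}`). -/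
def degLE2 (p : MvPolynomial (Fin 2) ℝ) (m : ℤ) : Prop :=
  p = 0 ∨ (p.totalDegree : ℤ) ≤ m

/-- The two-dimensional vector curl `rot⃗ q = (∂₂q, −∂₁q)` of a scalar polynomial. -/
def rotVec (q : MvPolynomial (Fin 2) ℝ) : Fin 2 → MvPolynomial (Fin 2) ℝ :=
  ![pderiv 1 q, -(pderiv 0 q)]

/-- The planar vector field `x p = (x₁p, x₂p)`. -/
def xMul2 (p : MvPolynomial (Fin 2) ℝ) : Fin 2 → MvPolynomial (Fin 2) ℝ :=
  fun i => X i * p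

lemma deg2 (d : Fin 2 →₀ ℕ) : Finsupp.degree d = d 0 + d 1 := by
  rw [Finsupp.degree_apply,
    Finset.sum_subset (Finset.subset_univ d.support)
      (by intro x _ hx; simpa using Finsupp.notMem_support_iff.mp hx)]
  exact Fin.sum_univ_two d

lemma isHom_deg {f : MvPolynomial (Fin 2) ℝ} {n : ℕ} (hf : f.IsHomogeneous n)
    {d : Fin 2 →₀ ℕ} (hd : coeff d f ≠ 0) : d 0 + d 1 = n := by
  rw [← deg2, Finsupp.degree_eq_weight_one]
  exact hf hd

lemma coeff_X_mul_pderiv (i : Fin 2) (f : MvPolynomial (Fin 2) ℝ) (m : Fin 2 →₀ ℕ) :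
    coeff m (X i * pderiv i f) = (m i : ℝ) * coeff m f := by
  induction f using MvPolynomial.induction_on' with
  | add p q hp hq => simp only [mul_add, map_add, coeff_add, hp, hq]
  | monomial s a =>
    rw [pderiv_monomial, X, monomial_mul, one_mul]
    by_cases hs : s i = 0
    · simp only [hs, Nat.cast_zero, mul_zero, monomial_zero, coeff_zero, coeff_monomial]
      by_cases hm : s = m
      · subst hm; simp [hs]
      · simp [hm]
    · have ht : Finsupp.single i 1 + (s - Finsupp.single i 1) = s := by
        ext j
        by_cases hj : j = i
        · subst hj; simp [Finsupp.single_apply]; omega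
        · simp [Finsupp.single_apply, Ne.symm hj, hj]
      rw [ht, coeff_monomial, coeff_monomial]
      by_cases hm : s = m
      · subst hm; simp; ring
      · simp [hm]

lemma coeff_pderiv (i : Fin 2) (f : MvPolynomial (Fin 2) ℝ) (m : Fin 2 →₀ ℕ) :
    coeff m (pderiv i f) = ((m i : ℝ) + 1) * coeff (m + Finsupp.single i 1) f := by
  induction f using MvPolynomial.induction_on' with
  | add p q hp hq => simp only [map_add, coeff_add, hp, hq]; ring
  | monomial s a =>
    rw [pderiv_monomial, coeff_monomial, coeff_monomial]
    by_cases hm : s = m + Finsupp.single i 1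
    · have h1 : s - Finsupp.single i 1 = m := by
        subst hm; ext j; by_cases hj : j = i <;>
          simp [Finsupp.single_apply, hj]
      have h2 : s i = m i + 1 := by
        subst hm; simp [Finsupp.single_apply]
      simp [hm, h1, h2, mul_comm]
    · simp only [hm, if_false, mul_zero]
      by_cases h1 : s - Finsupp.single i 1 = m
      · have hs : s i = 0 := by
          by_contra hs
          apply hm
          ext j
          by_cases hj : j = i
          all_goals have := DFunLike.congr_fun h1 j
          · subst hj
            simp [Finsupp.single_apply] at this ⊢
            omega
          · simp [Finsupp.single_apply, hj, Ne.symm hj] at this ⊢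
            exact this
        simp [h1, hs]
      · simp [h1]

lemma euler2 {a : MvPolynomial (Fin 2) ℝ} {d : ℕ} (ha : a.IsHomogeneous d) :
    X 0 * pderiv 0 a + X 1 * pderiv 1 a = C (d : ℝ) * a := by
  ext m
  rw [coeff_add, coeff_X_mul_pderiv, coeff_X_mul_pderiv, coeff_C_mul]
  by_cases h : coeff m a = 0
  · simp [h]
  · have := isHom_deg ha h
    have : (m 0 : ℝ) + m 1 = d := by exact_mod_cast congrArg (Nat.cast : ℕ → ℝ) this
    rw [← this]; ring

lemma pderiv_isHom {a : MvPolynomial (Fin 2) ℝ} {d : ℕ} (i : Fin 2)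
    (ha : a.IsHomogeneous (d + 1)) : (pderiv i a).IsHomogeneous d := by
  intro m hm
  rw [coeff_pderiv] at hm
  have hc : coeff (m + Finsupp.single i 1) a ≠ 0 := by
    intro h; rw [h, mul_zero] at hm; exact hm rfl
  have h1 := isHom_deg ha hc
  have h2 : (Finsupp.single i (1:ℕ)) 0 + (Finsupp.single i (1:ℕ)) 1 = 1 := by
    fin_cases i <;> simp
  rw [Finsupp.add_apply, Finsupp.add_apply] at h1
  change Finsupp.weight (fun _ => 1) m = d
  rw [← Finsupp.degree_eq_weight_one, deg2]
  omega

lemma pderiv_comm2 (i j : Fin 2) (f : MvPolynomial (Fin 2) ℝ) :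
    pderiv i (pderiv j f) = pderiv j (pderiv i f) := by
  induction f using MvPolynomial.induction_on' with
  | add p q hp hq => simp [hp, hq]
  | monomial s a =>
    rcases eq_or_ne i j with rfl | hij
    · rfl
    · rw [pderiv_monomial, pderiv_monomial, pderiv_monomial, pderiv_monomial]
      have h1 : (s - Finsupp.single j 1 : Fin 2 →₀ ℕ) i = s i := by
        rw [Finsupp.tsub_apply, Finsupp.single_apply]
        simp [Ne.symm hij]
      have h2 : (s - Finsupp.single i 1 : Fin 2 →₀ ℕ) j = s j := by
        rw [Finsupp.tsub_apply, Finsupp.single_apply]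
        simp [hij]
      have h3 : s - Finsupp.single j 1 - Finsupp.single i 1
          = s - Finsupp.single i 1 - Finsupp.single j 1 := by
        ext x
        simp only [Finsupp.tsub_apply]
        omega
      rw [h1, h2, h3]
      ring_nf

lemma kill {p : MvPolynomial (Fin 2) ℝ}
    (h : p + X 0 * pderiv 0 p + (p + X 1 * pderiv 1 p) = 0) : p = 0 := by
  ext m
  have := congrArg (coeff m) h
  rw [coeff_add, coeff_add, coeff_add, coeff_X_mul_pderiv, coeff_X_mul_pderiv,
    coeff_zero] at this
  have h2 : ((2:ℝ) + m 0 + m 1) * coeff m p = 0 := by linarith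
  have h3 : ((2:ℝ) + m 0 + m 1) ≠ 0 := by positivity
  rw [coeff_zero]
  exact (mul_eq_zero.mp h2).resolve_left h3

lemma key0 {a b : MvPolynomial (Fin 2) ℝ} {d : ℕ}
    (ha : a.IsHomogeneous d) :
    pderiv 1 (((d:ℝ)+1)⁻¹ • (X 1 * a - X 0 * b)) +
      X 0 * (((d:ℝ)+1)⁻¹ • (pderiv 0 a + pderiv 1 b)) = a := by
  have hne : ((d:ℝ)+1) ≠ 0 := by positivity
  have hinv : C (σ := Fin 2) (((d:ℝ)+1)⁻¹) * (C (d:ℝ) + 1) = 1 := by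
    rw [← C_1, ← C_add, ← C_mul, inv_mul_cancel₀ hne, C_1]
  have hD : pderiv 1 (X 1 * a - X 0 * b) =
      a + X 1 * pderiv 1 a - X 0 * pderiv 1 b := by
    simp [pderiv_mul, pderiv_X_self, pderiv_X_of_ne (show (0:Fin 2) ≠ 1 by decide)]
    ring
  rw [Derivation.map_smul, hD, smul_eq_C_mul, smul_eq_C_mul]
  linear_combination (C (σ := Fin 2) (((d:ℝ)+1)⁻¹)) * euler2 ha + a * hinv

lemma key1 {a b : MvPolynomial (Fin 2) ℝ} {d : ℕ}
    (hb : b.IsHomogeneous d) :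
    -pderiv 0 (((d:ℝ)+1)⁻¹ • (X 1 * a - X 0 * b)) +
      X 1 * (((d:ℝ)+1)⁻¹ • (pderiv 0 a + pderiv 1 b)) = b := by
  have hne : ((d:ℝ)+1) ≠ 0 := by positivity
  have hinv : C (σ := Fin 2) (((d:ℝ)+1)⁻¹) * (C (d:ℝ) + 1) = 1 := by
    rw [← C_1, ← C_add, ← C_mul, inv_mul_cancel₀ hne, C_1]
  have hD : pderiv 0 (X 1 * a - X 0 * b) =
      X 1 * pderiv 0 a - b - X 0 * pderiv 0 b := by
    simp [pderiv_mul, pderiv_X_self, pderiv_X_of_ne (show (1:Fin 2) ≠ 0 by decide)]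
    ring
  rw [Derivation.map_smul, hD, smul_eq_C_mul, smul_eq_C_mul]
  linear_combination (C (σ := Fin 2) (((d:ℝ)+1)⁻¹)) * euler2 hb + b * hinv

lemma sumHC {f : MvPolynomial (Fin 2) ℝ} {k : ℕ} (h : f.totalDegree ≤ k) :
    ∑ d ∈ Finset.range (k+1), homogeneousComponent d f = f := by
  have hsub : Finset.range (f.totalDegree + 1) ⊆ Finset.range (k+1) := by
    intro x hx; simp only [Finset.mem_range] at hx ⊢; omega
  rw [← Finset.sum_subset hsub
    (fun x hx hnx => homogeneousComponent_eq_zero x f (by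
      simp only [Finset.mem_range] at hx hnx; omega)),
    sum_homogeneousComponent]

lemma pd_deg {f : MvPolynomial (Fin 2) ℝ} {d k : ℕ} (hd : d ≤ k) (i : Fin 2) :
    (pderiv i (homogeneousComponent d f)).totalDegree ≤ k - 1 := by
  cases d with
  | zero =>
    rw [homogeneousComponent_zero, pderiv_C]
    simp
  | succ e =>
    exact le_trans (pderiv_isHom i (homogeneousComponent_isHomogeneous (e+1) f)).totalDegree_le
      (by omega)

/-- For every `k ≥ 0`,
`P_k(ℝ²;ℝ²) = (rot⃗ P_{k+1}(ℝ²)) ⊕ (x · P_{k-1}(ℝ²))`: the two subspaces together span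
`P_k(ℝ²;ℝ²)` and their intersection is `{0}`. -/
theorem planar_polynomial_decomposition (k : ℕ) :
    (∀ v : Fin 2 → MvPolynomial (Fin 2) ℝ, (∀ i, degLE2 (v i) (k : ℤ)) →
      ∃ (q : MvPolynomial (Fin 2) ℝ) (p : MvPolynomial (Fin 2) ℝ),
        degLE2 q ((k : ℤ) + 1) ∧ degLE2 p ((k : ℤ) - 1) ∧
        v = fun i => rotVec q i + xMul2 p i) ∧
    (∀ v : Fin 2 → MvPolynomial (Fin 2) ℝ,
      (∃ q : MvPolynomial (Fin 2) ℝ, degLE2 q ((k : ℤ) + 1) ∧ v = rotVec q) →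
      (∃ p : MvPolynomial (Fin 2) ℝ, degLE2 p ((k : ℤ) - 1) ∧ v = xMul2 p) →
      v = 0) := by
  constructor
  · intro v hv
    have hdeg : ∀ i, (v i).totalDegree ≤ k := by
      intro i
      rcases hv i with h | h
      · simp [h]
      · exact_mod_cast h
    refine ⟨∑ d ∈ Finset.range (k+1), ((d:ℝ)+1)⁻¹ •
        (X 1 * homogeneousComponent d (v 0) - X 0 * homogeneousComponent d (v 1)),
      ∑ d ∈ Finset.range (k+1), ((d:ℝ)+1)⁻¹ •
        (pderiv 0 (homogeneousComponent d (v 0)) + pderiv 1 (homogeneousComponent d (v 1))),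
      ?_, ?_, ?_⟩
    · right
      have hq : (∑ d ∈ Finset.range (k+1), ((d:ℝ)+1)⁻¹ •
          (X 1 * homogeneousComponent d (v 0) - X 0 * homogeneousComponent d (v 1))).totalDegree
          ≤ k + 1 := by
        apply totalDegree_finsetSum_le
        intro d hd
        refine (totalDegree_smul_le _ _).trans ?_
        refine le_trans (((isHomogeneous_X ℝ 1).mul (homogeneousComponent_isHomogeneous d (v 0))).sub
          ((isHomogeneous_X ℝ 0).mul (homogeneousComponent_isHomogeneous d (v 1)))).totalDegree_le ?_
        simp only [Finset.mem_range] at hd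
        omega
      exact_mod_cast le_trans (Nat.cast_le.mpr hq) (by push_cast; omega)
    · rcases Nat.eq_zero_or_pos k with rfl | hk
      · left
        simp [Finset.range_one, homogeneousComponent_zero, pderiv_C]
      · right
        have hp : (∑ d ∈ Finset.range (k+1), ((d:ℝ)+1)⁻¹ •
            (pderiv 0 (homogeneousComponent d (v 0)) +
              pderiv 1 (homogeneousComponent d (v 1)))).totalDegree ≤ k - 1 := by
          apply totalDegree_finsetSum_le
          intro d hd
          simp only [Finset.mem_range] at hd
          refine (totalDegree_smul_le _ _).trans ?_
          refine (totalDegree_add _ _).trans ?_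
          exact max_le (pd_deg (by omega) 0) (pd_deg (by omega) 1)
        have : ((k - 1 : ℕ) : ℤ) = (k : ℤ) - 1 := by
          rw [Nat.cast_sub hk]; simp
        rw [← this]
        exact_mod_cast hp
    · funext i
      fin_cases i
      · show v 0 = rotVec _ 0 + xMul2 _ 0
        rw [show rotVec (∑ d ∈ Finset.range (k+1), ((d:ℝ)+1)⁻¹ •
            (X 1 * homogeneousComponent d (v 0) - X 0 * homogeneousComponent d (v 1))) 0
            = pderiv 1 (∑ d ∈ Finset.range (k+1), ((d:ℝ)+1)⁻¹ •
            (X 1 * homogeneousComponent d (v 0) - X 0 * homogeneousComponent d (v 1)))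
          from rfl]
        show v 0 = _ + X 0 * _
        rw [map_sum, Finset.mul_sum, ← Finset.sum_add_distrib]
        rw [Finset.sum_congr rfl
          (fun d _ => key0 (homogeneousComponent_isHomogeneous d (v 0)))]
        exact (sumHC (hdeg 0)).symm
      · show v 1 = rotVec _ 1 + xMul2 _ 1
        rw [show rotVec (∑ d ∈ Finset.range (k+1), ((d:ℝ)+1)⁻¹ •
            (X 1 * homogeneousComponent d (v 0) - X 0 * homogeneousComponent d (v 1))) 1
            = -pderiv 0 (∑ d ∈ Finset.range (k+1), ((d:ℝ)+1)⁻¹ •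
            (X 1 * homogeneousComponent d (v 0) - X 0 * homogeneousComponent d (v 1)))
          from rfl]
        show v 1 = _ + X 1 * _
        rw [map_sum, ← Finset.sum_neg_distrib, Finset.mul_sum, ← Finset.sum_add_distrib]
        rw [Finset.sum_congr rfl
          (fun d _ => key1 (homogeneousComponent_isHomogeneous d (v 1)))]
        exact (sumHC (hdeg 1)).symm
  · rintro v ⟨q, -, hq⟩ ⟨p, -, hp⟩
    have e0 : pderiv 1 q = X 0 * p := by
      have := congrFun (hq.symm.trans hp) 0
      simpa [rotVec, xMul2] using this
    have e1 : -(pderiv 0 q) = X 1 * p := by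
      have := congrFun (hq.symm.trans hp) 1
      simpa [rotVec, xMul2] using this
    have d0 : pderiv 0 (X 0 * p) = p + X 0 * pderiv 0 p := by
      rw [pderiv_mul, pderiv_X_self, one_mul]
    have d1 : pderiv 1 (X 1 * p) = p + X 1 * pderiv 1 p := by
      rw [pderiv_mul, pderiv_X_self, one_mul]
    have hzero : p + X 0 * pderiv 0 p + (p + X 1 * pderiv 1 p) = 0 := by
      rw [← d0, ← d1, ← e0, ← e1, map_neg, pderiv_comm2]
      ring
    have hp0 : p = 0 := kill hzero
    rw [hp, hp0]
    funext i
    simp [xMul2]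

end
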